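/- Let K ≥ 1, let z ~ N(0, I_K) and let μ ∈ ℝ^K. Then for every k ∈ {1, …, K}, P[argmax(z + μ) = k] = ∫_ℝ φ(t) ∏_{j ≠ k} Φ(t + μ_k − μ_j) dt, where φ and Φ are the standard Gaussian density and cumulative distribution function, respectively. -/
import Mathlib


open MeasureTheory ProbabilityTheory

/-- The law of `K` independent standard Gaussian random variables, `N(0, I_K)`. -/
noncomputable def stdGaussianPi (K : ℕ) : Measure (Fin K → ℝ) :=
  Measure.pi fun _ => gaussianReal 0 1

/-- The event `{z : argmax(z + μ) = k}`. -/
def argmaxEvent {K : ℕ} (μ : Fin K → ℝ) (k : Fin K) : Set (Fin K → ℝ) :=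
  {z | ∀ j, j ≠ k → z j + μ j < z k + μ k}

/-- The standard Gaussian density `φ(t) = (2π)^{-1/2} exp(−t²/2)`. -/
noncomputable def stdNormalPDF (t : ℝ) : ℝ :=
  (Real.sqrt (2 * Real.pi))⁻¹ * Real.exp (-t ^ 2 / 2)

/-- The standard Gaussian CDF `Φ(t) = ∫_{−∞}^t φ(s) ds`. -/
noncomputable def stdNormalCDF (t : ℝ) : ℝ :=
  ∫ s in Set.Iic t, stdNormalPDF s

lemma stdNormalPDF_eq (x : ℝ) : stdNormalPDF x = gaussianPDFReal 0 1 x := by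
  simp [stdNormalPDF, gaussianPDFReal]

lemma stdNormalCDF_eq (a : ℝ) : stdNormalCDF a = (gaussianReal 0 1 (Set.Iio a)).toReal := by
  rw [gaussianReal_apply_eq_integral 0 one_ne_zero,
    ENNReal.toReal_ofReal (integral_nonneg fun x => gaussianPDFReal_nonneg 0 1 x),
    stdNormalCDF, integral_Iic_eq_integral_Iio]
  exact setIntegral_congr_fun measurableSet_Iio fun x _ => stdNormalPDF_eq x

/-- For `z ~ N(0, I_K)` and `μ ∈ ℝ^K`,
`P[argmax(z + μ) = k] = ∫_ℝ φ(t) ∏_{j ≠ k} Φ(t + μ_k − μ_j) dt`. -/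
theorem gaussianMax_prob_eq_integral (K : ℕ) (hK : 1 ≤ K) (μ : Fin K → ℝ) (k : Fin K) :
    (stdGaussianPi K (argmaxEvent μ k)).toReal =
      ∫ t : ℝ, stdNormalPDF t * ∏ j ∈ Finset.univ.erase k, stdNormalCDF (t + μ k - μ j) := by
  obtain ⟨n, rfl⟩ : ∃ n, K = n + 1 := ⟨K - 1, by omega⟩
  set γ : Measure ℝ := gaussianReal 0 1 with hγ
  set S : Set (ℝ × (Fin n → ℝ)) := {p | ∀ j, p.2 j < p.1 + μ k - μ (k.succAbove j)} with hSdef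
  have hSmeas : MeasurableSet S := by
    have : S = ⋂ j, {p : ℝ × (Fin n → ℝ) | p.2 j < p.1 + μ k - μ (k.succAbove j)} := by
      ext p; simp [hSdef]
    rw [this]
    exact MeasurableSet.iInter fun j => measurableSet_lt (by fun_prop) (by fun_prop)
  have hpre : argmaxEvent μ k =
      (MeasurableEquiv.piFinSuccAbove (fun _ => ℝ) k) ⁻¹' S := by
    ext z
    simp only [argmaxEvent, Set.mem_setOf_eq, Set.mem_preimage,
      MeasurableEquiv.piFinSuccAbove_apply, Fin.insertNthEquiv, Fin.removeNth,
      Equiv.coe_fn_symm_mk, hSdef]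
    constructor
    · intro h j
      have := h (k.succAbove j) (Fin.succAbove_ne k j)
      linarith
    · intro h j hj
      obtain ⟨i, rfl⟩ := Fin.exists_succAbove_eq hj
      have := h i
      linarith
  have hmp := measurePreserving_piFinSuccAbove (fun _ : Fin (n + 1) => γ) k
  have key : stdGaussianPi (n + 1) (argmaxEvent μ k) =
      (γ.prod (Measure.pi fun _ : Fin n => γ)) S := by
    rw [stdGaussianPi, hpre, ← hmp.map_eq, MeasurableEquiv.map_apply]
  rw [key, Measure.prod_apply hSmeas]
  have hsec : ∀ t : ℝ, Prod.mk t ⁻¹' S =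
      Set.pi Set.univ (fun j => Set.Iio (t + μ k - μ (k.succAbove j))) := by
    intro t; ext w; simp [hSdef, Set.mem_pi]
  have hmeas : AEMeasurable (fun t => (Measure.pi fun _ : Fin n => γ) (Prod.mk t ⁻¹' S)) γ :=
    (measurable_measure_prodMk_left hSmeas).aemeasurable
  have hfin : ∀ᵐ t ∂γ, (Measure.pi fun _ : Fin n => γ) (Prod.mk t ⁻¹' S) < ⊤ :=
    Filter.Eventually.of_forall fun t => measure_lt_top _ _
  rw [← integral_toReal hmeas hfin]
  have hval : ∀ t : ℝ, ((Measure.pi fun _ : Fin n => γ) (Prod.mk t ⁻¹' S)).toReal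
      = ∏ j ∈ Finset.univ.erase k, stdNormalCDF (t + μ k - μ j) := by
    intro t
    rw [hsec t, Measure.pi_pi, ENNReal.toReal_prod]
    rw [show (∏ j : Fin n, (γ (Set.Iio (t + μ k - μ (k.succAbove j)))).toReal)
        = ∏ j : Fin n, stdNormalCDF (t + μ k - μ (k.succAbove j)) from
      Finset.prod_congr rfl fun j _ => (stdNormalCDF_eq _).symm]
    refine Finset.prod_nbij (fun j => k.succAbove j) ?_ ?_ ?_ ?_
    · intro a _; simp [Fin.succAbove_ne k a]
    · intro a _ b _ h; exact Fin.succAbove_right_injective h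
    · intro a ha
      simp only [Finset.coe_erase, Set.mem_diff, Finset.coe_univ, Set.mem_univ,
        Set.mem_singleton_iff, true_and] at ha
      obtain ⟨i, rfl⟩ := Fin.exists_succAbove_eq ha
      exact ⟨i, by simp⟩
    · intro a _; rfl
  rw [integral_congr_ae (Filter.Eventually.of_forall hval)]
  have hγd : γ = volume.withDensity (fun x => ((gaussianPDFReal 0 1 x).toNNReal : ENNReal)) := by
    rw [hγ, gaussianReal_of_var_ne_zero 0 one_ne_zero]
    congr 1
  rw [hγd, integral_withDensity_eq_integral_smul (measurable_gaussianPDFReal 0 1).real_toNNReal]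
  refine integral_congr_ae (Filter.Eventually.of_forall fun t => ?_)
  simp only [NNReal.smul_def, Real.coe_toNNReal _ (gaussianPDFReal_nonneg 0 1 t),
    smul_eq_mul, stdNormalPDF_eq]
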